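/- Discrete convolution identities: under (H0), for every h > 0 and every integer m ≥ 0, the Grünwald-type coefficients satisfy: Σ_{j=0}^m G^{k_{−1}}_{m−j,h} G^ψ_{j,h} equals 1/h if m = 0, equals −1/h if m = 1, and equals 0 if m ≥ 2; Σ_{j=0}^m G^{k_0}_{m−j,h} G^ψ_{j,h} = Σ_{j=0}^m G^{k_{−1}}_{m−j,h} G^{ψ−1}_{j,h}, and both equal 1 if m = 0 and 0 if m ≥ 1; Σ_{j=0}^m G^{k_1}_{m−j,h} G^ψ_{j,h} = Σ_{j=0}^m G^{k_0}_{m−j,h} G^{ψ−1}_{j,h} = h for all m ≥ 0; and Σ_{j=0}^m G^{k_1}_{m−j,h} G^{ψ−1}_{j,h} = (m+1) h² for all m ≥ 0. -/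

import Mathlib

open MeasureTheory Set Filter Topology

noncomputable section
open Metric ENNReal

/-- The tail `φ((y, ∞))` of the Lévy measure `φ`. -/
def levyTail (φ : Measure ℝ) (y : ℝ) : ℝ := (φ (Ioi y)).toReal

/-- The function `Φ(x) = ∫_x^∞ φ((y,∞)) dy` for `x > 0`, and `0` for `x ≤ 0`. -/
def PhiFn (φ : Measure ℝ) (x : ℝ) : ℝ :=
  if 0 < x then ∫ y in Ioi x, levyTail φ y else 0

/-- The Laplace exponent `ψ(ξ) = ξ² ∫_0^∞ e^{-ξ x} Φ(x) dx`. -/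
def psiFn (φ : Measure ℝ) (ξ : ℂ) : ℂ :=
  ξ ^ 2 * ∫ x in Ioi (0 : ℝ), Complex.exp (-ξ * (x : ℂ)) * (PhiFn φ x : ℂ)

/-- Assumption (H0): `φ` is a nonnegative Borel measure on `(0,∞)` with
`∫ (z² ∧ z) φ(dz) < ∞` and `∫_{(0,1)} z φ(dz) = ∞`. -/
def H0 (φ : Measure ℝ) : Prop :=
  φ (Iic 0) = 0 ∧
  (∫⁻ z in Ioi (0 : ℝ), ENNReal.ofReal (min (z ^ 2) z) ∂φ) < ⊤ ∧
  (∫⁻ z in Ioo (0 : ℝ) 1, ENNReal.ofReal z ∂φ) = ⊤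

/-- Grünwald-type coefficients `G^ψ_{j,h} = ((-1)^j/(j! h^j)) ψ^{(j)}(1/h)`. -/
def grunPsi (φ : Measure ℝ) (j : ℕ) (h : ℝ) : ℝ :=
  (((-1 : ℂ) ^ j / ((Nat.factorial j : ℂ) * (h : ℂ) ^ j)) *
    iteratedDeriv j (psiFn φ) ((1 : ℂ) / (h : ℂ))).re

/-- Grünwald-type coefficients of order `ψ - 1`:
`G^{ψ-1}_{j,h} = ((-1)^j/(j! h^j)) (d^j/dξ^j)(ψ(ξ)/ξ)|_{ξ=1/h}`. -/
def grunPsiM1 (φ : Measure ℝ) (j : ℕ) (h : ℝ) : ℝ :=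
  (((-1 : ℂ) ^ j / ((Nat.factorial j : ℂ) * (h : ℂ) ^ j)) *
    iteratedDeriv j (fun ξ : ℂ => psiFn φ ξ / ξ) ((1 : ℂ) / (h : ℂ))).re

/-- Grünwald-type coefficients for the scale functions:
`G^{k_i}_{j,h} = ((-1)^j/(j! h^j)) (d^j/dξ^j)(ξ^{-i}/ψ(ξ))|_{ξ=1/h}` for `i ∈ {1,0,-1,-2}`. -/
def grunK (φ : Measure ℝ) (i : ℤ) (j : ℕ) (h : ℝ) : ℝ :=
  (((-1 : ℂ) ^ j / ((Nat.factorial j : ℂ) * (h : ℂ) ^ j)) *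
    iteratedDeriv j (fun ξ : ℂ => ξ ^ (-i) / psiFn φ ξ) ((1 : ℂ) / (h : ℂ))).re


theorem pascal_sum (N : ℕ) (F G : ℕ → ℂ) :
    (∑ j ∈ Finset.range (N + 1),
      (N.choose j : ℂ) * (F (j+1) * G (N - j) + F j * G (N - j + 1)))
    = ∑ j ∈ Finset.range (N + 2), ((N+1).choose j : ℂ) * F j * G (N + 1 - j) := by
  have split : (∑ j ∈ Finset.range (N + 1),
      (N.choose j : ℂ) * (F (j+1) * G (N - j) + F j * G (N - j + 1)))
      = (∑ j ∈ Finset.range (N + 1), (N.choose j : ℂ) * F (j+1) * G (N - j))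
      + (∑ j ∈ Finset.range (N + 1), (N.choose j : ℂ) * F j * G (N - j + 1)) := by
    rw [← Finset.sum_add_distrib]
    exact Finset.sum_congr rfl fun j _ => by ring
  rw [split]
  have h1 : (∑ j ∈ Finset.range (N + 1), (N.choose j : ℂ) * F (j+1) * G (N - j))
      = ∑ j ∈ Finset.range (N + 2),
        (if j = 0 then 0 else (N.choose (j-1) : ℂ)) * F j * G (N + 1 - j) := by
    rw [Finset.sum_range_succ' (fun j =>
      (if j = 0 then 0 else (N.choose (j-1) : ℂ)) * F j * G (N + 1 - j))]
    rw [if_pos rfl, zero_mul, zero_mul, add_zero]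
    refine Finset.sum_congr rfl fun j hj => ?_
    rw [Finset.mem_range] at hj
    have e1 : N + 1 - (j + 1) = N - j := by omega
    rw [if_neg (Nat.succ_ne_zero j), Nat.succ_sub_one, e1]
  have h2 : (∑ j ∈ Finset.range (N + 1), (N.choose j : ℂ) * F j * G (N - j + 1))
      = ∑ j ∈ Finset.range (N + 2),
        (if j = N + 1 then 0 else (N.choose j : ℂ)) * F j * G (N + 1 - j) := by
    rw [Finset.sum_range_succ (fun j =>
      (if j = N + 1 then 0 else (N.choose j : ℂ)) * F j * G (N + 1 - j))]
    rw [if_pos rfl, zero_mul, zero_mul, add_zero]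
    refine Finset.sum_congr rfl fun j hj => ?_
    rw [Finset.mem_range] at hj
    have e1 : N + 1 - j = N - j + 1 := by omega
    rw [if_neg (by omega), e1]
  rw [h1, h2, ← Finset.sum_add_distrib]
  refine Finset.sum_congr rfl fun j hj => ?_
  rw [Finset.mem_range] at hj
  by_cases hj0 : j = 0
  · subst hj0; simp
  by_cases hjN : j = N + 1
  · subst hjN
    simp [Nat.add_sub_cancel, Nat.choose_self]
  · have hpc : (((N+1).choose j : ℕ) : ℂ) = (N.choose (j-1) : ℂ) + (N.choose j : ℂ) := by
      obtain ⟨i, rfl⟩ := Nat.exists_eq_succ_of_ne_zero hj0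
      rw [Nat.choose_succ_succ]
      push_cast [Nat.succ_sub_one]
      ring
    rw [if_neg hj0, if_neg hjN, hpc]
    ring

/-- Leibniz formula for iterated derivatives of a product of analytic functions. -/
theorem iteratedDeriv_mul_of_analytic {f g : ℂ → ℂ} {s : Set ℂ} (hs : IsOpen s)
    (hf : AnalyticOnNhd ℂ f s) (hg : AnalyticOnNhd ℂ g s) (n : ℕ) :
    ∀ x ∈ s, iteratedDeriv n (fun z => f z * g z) x =
      ∑ j ∈ Finset.range (n + 1),
        (n.choose j : ℂ) * iteratedDeriv j f x * iteratedDeriv (n - j) g x := by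
  induction n with
  | zero => intro x hx; simp
  | succ n IH =>
    intro x hx
    have hfd : ∀ j, AnalyticOnNhd ℂ (iteratedDeriv j f) s := by
      intro j; induction j with
      | zero => simpa using hf
      | succ j IHj => rw [iteratedDeriv_succ]; exact IHj.deriv
    have hgd : ∀ j, AnalyticOnNhd ℂ (iteratedDeriv j g) s := by
      intro j; induction j with
      | zero => simpa using hg
      | succ j IHj => rw [iteratedDeriv_succ]; exact IHj.deriv
    have heq : iteratedDeriv n (fun z => f z * g z) =ᶠ[𝓝 x]
        fun y => ∑ j ∈ Finset.range (n + 1),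
          (n.choose j : ℂ) * iteratedDeriv j f y * iteratedDeriv (n - j) g y := by
      filter_upwards [hs.mem_nhds hx] with y hy using IH y hy
    rw [iteratedDeriv_succ, heq.deriv_eq]
    have hterm : ∀ j ∈ Finset.range (n + 1), HasDerivAt
        (fun y => (n.choose j : ℂ) * iteratedDeriv j f y * iteratedDeriv (n - j) g y)
        ((n.choose j : ℂ) * (iteratedDeriv (j+1) f x * iteratedDeriv (n - j) g x
          + iteratedDeriv j f x * iteratedDeriv (n - j + 1) g x)) x := by
      intro j _
      have h1 : HasDerivAt (iteratedDeriv j f) (iteratedDeriv (j+1) f x) x := by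
        rw [iteratedDeriv_succ]
        exact ((hfd j x hx).differentiableAt).hasDerivAt
      have h2 : HasDerivAt (iteratedDeriv (n-j) g) (iteratedDeriv (n-j+1) g x) x := by
        rw [iteratedDeriv_succ]
        exact ((hgd (n-j) x hx).differentiableAt).hasDerivAt
      simpa [mul_assoc] using (h1.mul h2).const_mul ((n.choose j : ℂ))
    have hsum : HasDerivAt (fun y => ∑ j ∈ Finset.range (n + 1),
        (n.choose j : ℂ) * iteratedDeriv j f y * iteratedDeriv (n - j) g y)
        (∑ j ∈ Finset.range (n + 1),
          (n.choose j : ℂ) * (iteratedDeriv (j+1) f x * iteratedDeriv (n - j) g x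
            + iteratedDeriv j f x * iteratedDeriv (n - j + 1) g x)) x :=
      HasDerivAt.fun_sum hterm
    rw [hsum.deriv]
    exact pascal_sum n (fun j => iteratedDeriv j f x) (fun j => iteratedDeriv j g x)


local notation "conj" => (starRingEnd ℂ)

theorem hasDerivAt_conj_comp {f : ℂ → ℂ} {z d : ℂ} (hf : HasDerivAt f d (conj z)) :
    HasDerivAt (fun w => conj (f (conj w))) (conj d) z := by
  rw [hasDerivAt_iff_tendsto_slope] at hf ⊢
  have hconj : Tendsto conj (𝓝[≠] z) (𝓝[≠] (conj z)) := by
    apply tendsto_nhdsWithin_of_tendsto_nhds_of_eventually_within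
    · exact (Complex.continuous_conj.tendsto z).mono_left nhdsWithin_le_nhds
    · filter_upwards [self_mem_nhdsWithin] with w hw
      simp only [mem_compl_iff, mem_singleton_iff] at hw ⊢
      exact fun hc => hw (by simpa using congrArg conj hc)
  have key : Tendsto (fun w => conj (slope f (conj z) (conj w))) (𝓝[≠] z) (𝓝 (conj d)) :=
    (Complex.continuous_conj.tendsto d).comp (hf.comp hconj)
  refine key.congr (fun w => ?_)
  simp only [slope_def_field]
  rw [map_div₀, map_sub, map_sub, Complex.conj_conj, Complex.conj_conj]

theorem conj_mem_ball {c : ℂ} (hc : conj c = c) {r : ℝ} {z : ℂ} (hz : z ∈ ball c r) :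
    conj z ∈ ball c r := by
  simp only [mem_ball, Complex.dist_eq] at hz ⊢
  rw [show conj z - c = conj (z - c) by rw [map_sub, hc], Complex.norm_conj]
  exact hz

theorem deriv_conj_symm {g : ℂ → ℂ} {c : ℂ} (hc : conj c = c) {r : ℝ}
    (hana : AnalyticOnNhd ℂ g (ball c r))
    (hsym : ∀ z ∈ ball c r, g (conj z) = conj (g z)) :
    ∀ z ∈ ball c r, deriv g (conj z) = conj (deriv g z) := by
  intro z hz
  have hz' : conj z ∈ ball c r := conj_mem_ball hc hz
  have h1 : HasDerivAt g (deriv g (conj z)) (conj z) :=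
    ((hana _ hz').differentiableAt).hasDerivAt
  have h2 : HasDerivAt g (conj (deriv g z)) (conj z) := by
    have hbase : HasDerivAt g (deriv g z) (conj (conj z)) := by
      rw [Complex.conj_conj]
      exact ((hana _ hz).differentiableAt).hasDerivAt
    have h3 := hasDerivAt_conj_comp (z := conj z) hbase
    refine h3.congr_of_eventuallyEq ?_
    filter_upwards [isOpen_ball.mem_nhds hz'] with w hw
    have hw2 : g (conj w) = conj (g w) := hsym w hw
    rw [hw2, Complex.conj_conj]
  exact (h2.unique h1).symm

/-- iterated derivatives of a Schwarz-reflection-symmetric analytic function are symmetric. -/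
theorem iteratedDeriv_conj_symm {f : ℂ → ℂ} {c : ℂ} (hc : conj c = c) {r : ℝ}
    (hf : DifferentiableOn ℂ f (ball c r))
    (hrefl : ∀ z ∈ ball c r, f (conj z) = conj (f z)) (n : ℕ) :
    ∀ z ∈ ball c r, iteratedDeriv n f (conj z) = conj (iteratedDeriv n f z) := by
  have han : AnalyticOnNhd ℂ f (ball c r) := hf.analyticOnNhd isOpen_ball
  suffices H : ∀ n : ℕ, AnalyticOnNhd ℂ (iteratedDeriv n f) (ball c r) ∧
      ∀ z ∈ ball c r, iteratedDeriv n f (conj z) = conj (iteratedDeriv n f z) from (H n).2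
  intro n
  induction n with
  | zero => exact ⟨by simpa using han, by simpa using hrefl⟩
  | succ n IH =>
    obtain ⟨hana, hsym⟩ := IH
    refine ⟨by rw [iteratedDeriv_succ]; exact hana.deriv, ?_⟩
    intro z hz
    rw [iteratedDeriv_succ]
    exact deriv_conj_symm hc hana hsym z hz


/-- integral of the tail from `x` on, in `ℝ≥0∞`. -/
def tailInt (φ : Measure ℝ) (x : ℝ) : ℝ≥0∞ := ∫⁻ y in Ioi x, ENNReal.ofReal (levyTail φ y)

section MeasureFacts

variable {φ : Measure ℝ} (hH : H0 φ)

theorem tail_antitone : Antitone (fun y => φ (Ioi y)) :=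
  fun _ _ hle => measure_mono (Ioi_subset_Ioi hle)

theorem tail_meas : Measurable (fun y => φ (Ioi y)) :=
  Antitone.measurable tail_antitone

theorem levyTail_meas : Measurable (levyTail φ) := tail_meas.ennreal_toReal

include hH

theorem tail_lt_top {y : ℝ} (hy : 0 < y) : φ (Ioi y) < ⊤ := by
  have hmin : 0 < min (y ^ 2) y := lt_min (by positivity) hy
  have key : ENNReal.ofReal (min (y ^ 2) y) * φ (Ioi y)
      ≤ ∫⁻ z in Ioi (0:ℝ), ENNReal.ofReal (min (z ^ 2) z) ∂φ := by
    calc ENNReal.ofReal (min (y ^ 2) y) * φ (Ioi y)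
        = ∫⁻ _ in Ioi y, ENNReal.ofReal (min (y ^ 2) y) ∂φ := by
          rw [setLIntegral_const, mul_comm]
      _ ≤ ∫⁻ z in Ioi y, ENNReal.ofReal (min (z ^ 2) z) ∂φ := by
          refine setLIntegral_mono (by measurability) ?_
          intro z hz
          rw [mem_Ioi] at hz
          have h2 : y ^ 2 ≤ z ^ 2 := by nlinarith
          exact ENNReal.ofReal_le_ofReal (min_le_min h2 hz.le)
      _ ≤ ∫⁻ z in Ioi (0:ℝ), ENNReal.ofReal (min (z ^ 2) z) ∂φ :=
          lintegral_mono_set (Ioi_subset_Ioi hy.le)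
  have hfin := lt_of_le_of_lt key hH.2.1
  by_contra htop
  rw [not_lt, top_le_iff] at htop
  rw [htop, ENNReal.mul_top (ENNReal.ofReal_pos.2 hmin).ne'] at hfin
  exact (lt_irrefl _ hfin).elim

theorem sigmaFinite_phi : SigmaFinite φ := by
  refine ⟨⟨⟨fun n => Iic 0 ∪ Ioi (1/(n+1) : ℝ), fun _ => trivial, fun n => ?_, ?_⟩⟩⟩
  · refine lt_of_le_of_lt (measure_union_le _ _) ?_
    rw [hH.1, zero_add]
    exact tail_lt_top hH (by positivity)
  · refine eq_univ_of_forall fun x => ?_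
    rcases le_or_gt x 0 with hx | hx
    · exact mem_iUnion.2 ⟨0, Or.inl hx⟩
    · obtain ⟨n, hn⟩ := exists_nat_one_div_lt hx
      exact mem_iUnion.2 ⟨n, Or.inr hn⟩

theorem tailInt_eq {x : ℝ} (hx : 0 < x) :
    tailInt φ x = ∫⁻ z in Ioi x, ENNReal.ofReal (z - x) ∂φ := by
  have hres : IsFiniteMeasure (φ.restrict (Ioi x)) :=
    ⟨by rw [Measure.restrict_apply_univ]; exact tail_lt_top hH hx⟩
  have step1 : tailInt φ x = ∫⁻ y in Ioi x, (φ.restrict (Ioi x)) (Ioi y) := by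
    refine setLIntegral_congr_fun measurableSet_Ioi (fun y hy => ?_)
    rw [mem_Ioi] at hy
    rw [Measure.restrict_apply measurableSet_Ioi,
      inter_eq_self_of_subset_left (Ioi_subset_Ioi hy.le)]
    exact ENNReal.ofReal_toReal (tail_lt_top hH (hx.trans hy)).ne
  have step2 : ∀ y : ℝ, (φ.restrict (Ioi x)) (Ioi y)
      = ∫⁻ z, (if y < z then (1:ℝ≥0∞) else 0) ∂(φ.restrict (Ioi x)) := by
    intro y
    rw [← lintegral_indicator_one measurableSet_Ioi]
    exact lintegral_congr fun z => by simp [Set.indicator_apply, mem_Ioi]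
  have hmeasp : AEMeasurable (Function.uncurry fun (y z : ℝ) => if y < z then (1:ℝ≥0∞) else 0)
      ((volume.restrict (Ioi x)).prod (φ.restrict (Ioi x))) := by
    refine Measurable.aemeasurable ?_
    exact Measurable.ite (measurableSet_lt measurable_fst measurable_snd)
      measurable_const measurable_const
  have step3 : (∫⁻ y in Ioi x, ∫⁻ z, (if y < z then (1:ℝ≥0∞) else 0) ∂(φ.restrict (Ioi x)))
      = ∫⁻ z, (∫⁻ y in Ioi x, if y < z then (1:ℝ≥0∞) else 0) ∂(φ.restrict (Ioi x)) :=
    lintegral_lintegral_swap hmeasp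
  have step4 : ∀ z : ℝ, (∫⁻ y in Ioi x, if y < z then (1:ℝ≥0∞) else 0)
      = ENNReal.ofReal (z - x) := by
    intro z
    have : (fun y => if y < z then (1:ℝ≥0∞) else 0) = (Iio z).indicator (fun _ => 1) := by
      ext y; simp [Set.indicator_apply, mem_Iio]
    rw [this, lintegral_indicator measurableSet_Iio]
    rw [Measure.restrict_restrict measurableSet_Iio]
    rw [Iio_inter_Ioi, setLIntegral_one, Real.volume_Ioo]
  have step5 : (∫⁻ z, ENNReal.ofReal (z - x) ∂(φ.restrict (Ioi x)))
      = ∫⁻ z in Ioi x, ENNReal.ofReal (z - x) ∂φ := rfl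
  rw [step1]
  calc (∫⁻ y in Ioi x, (φ.restrict (Ioi x)) (Ioi y))
      = ∫⁻ y in Ioi x, ∫⁻ z, (if y < z then (1:ℝ≥0∞) else 0) ∂(φ.restrict (Ioi x)) := by
        exact lintegral_congr fun y => step2 y
    _ = ∫⁻ z, (∫⁻ y in Ioi x, if y < z then (1:ℝ≥0∞) else 0) ∂(φ.restrict (Ioi x)) := step3
    _ = ∫⁻ z, ENNReal.ofReal (z - x) ∂(φ.restrict (Ioi x)) := lintegral_congr step4
    _ = ∫⁻ z in Ioi x, ENNReal.ofReal (z - x) ∂φ := step5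

end MeasureFacts

section MeasureFacts2

variable {φ : Measure ℝ} (hH : H0 φ)

theorem real_min_bound {x z : ℝ} (hx : 0 < x) (hzx : x < z) :
    z - x ≤ (x⁻¹ ⊔ 1) * min (z ^ 2) z := by
  have hz : 0 < z := hx.trans hzx
  rcases le_total z 1 with hz1 | hz1
  · have hmin : min (z ^ 2) z = z ^ 2 := min_eq_left (by nlinarith)
    rw [hmin]
    have h1 : z - x ≤ x⁻¹ * z ^ 2 := by
      have h2 : x * (z - x) ≤ z ^ 2 := by nlinarith
      calc z - x = x⁻¹ * (x * (z - x)) := by field_simp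
        _ ≤ x⁻¹ * z ^ 2 := mul_le_mul_of_nonneg_left h2 (by positivity)
    calc z - x ≤ x⁻¹ * z ^ 2 := h1
      _ ≤ (x⁻¹ ⊔ 1) * z ^ 2 :=
          mul_le_mul_of_nonneg_right (le_max_left _ _) (by positivity)
  · have hmin : min (z ^ 2) z = z := min_eq_right (by nlinarith)
    rw [hmin]
    calc z - x ≤ z := by linarith
      _ = 1 * z := (one_mul z).symm
      _ ≤ (x⁻¹ ⊔ 1) * z := mul_le_mul_of_nonneg_right (le_max_right _ _) hz.le

include hH

theorem tailInt_le {x : ℝ} (hx : 0 < x) :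
    tailInt φ x ≤ ENNReal.ofReal (x⁻¹ ⊔ 1) * (∫⁻ z in Ioi (0:ℝ), ENNReal.ofReal (min (z ^ 2) z) ∂φ) := by
  rw [tailInt_eq hH hx]
  calc (∫⁻ z in Ioi x, ENNReal.ofReal (z - x) ∂φ)
      ≤ ∫⁻ z in Ioi x, ENNReal.ofReal (x⁻¹ ⊔ 1) * ENNReal.ofReal (min (z ^ 2) z) ∂φ := by
        refine setLIntegral_mono (by measurability) fun z hz => ?_
        rw [← ENNReal.ofReal_mul (by positivity)]
        exact ENNReal.ofReal_le_ofReal (real_min_bound hx (mem_Ioi.1 hz))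
    _ = ENNReal.ofReal (x⁻¹ ⊔ 1) * ∫⁻ z in Ioi x, ENNReal.ofReal (min (z ^ 2) z) ∂φ :=
        lintegral_const_mul' _ _ ENNReal.ofReal_ne_top
    _ ≤ ENNReal.ofReal (x⁻¹ ⊔ 1) * ∫⁻ z in Ioi 0, ENNReal.ofReal (min (z ^ 2) z) ∂φ :=
        mul_le_mul_right (lintegral_mono_set (Ioi_subset_Ioi hx.le)) _

theorem tailInt_lt_top {x : ℝ} (hx : 0 < x) : tailInt φ x < ⊤ :=
  lt_of_le_of_lt (tailInt_le hH hx) (ENNReal.mul_lt_top ENNReal.ofReal_lt_top hH.2.1)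

theorem PhiFn_eq_toReal {x : ℝ} (hx : 0 < x) : PhiFn φ x = (tailInt φ x).toReal := by
  rw [PhiFn, if_pos hx, tailInt]
  exact integral_eq_lintegral_of_nonneg_ae (ae_of_all _ fun y => ENNReal.toReal_nonneg)
    levyTail_meas.aestronglyMeasurable.restrict

theorem PhiFn_eq_indicator : PhiFn φ = (Ioi (0:ℝ)).indicator (fun x => (tailInt φ x).toReal) := by
  funext x
  rcases lt_or_ge 0 x with hx | hx
  · rw [PhiFn_eq_toReal hH hx, Set.indicator_of_mem (mem_Ioi.2 hx)]
  · rw [PhiFn, if_neg (not_lt.2 hx), Set.indicator_of_notMem (by simp [hx, not_lt])]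

theorem PhiFn_meas : Measurable (PhiFn φ) := by
  rw [PhiFn_eq_indicator hH]
  refine Measurable.indicator ?_ measurableSet_Ioi
  refine Measurable.ennreal_toReal (Antitone.measurable fun a b hab => ?_)
  exact lintegral_mono_set (Ioi_subset_Ioi hab)

theorem PhiFn_nonneg (x : ℝ) : 0 ≤ PhiFn φ x := by
  rw [PhiFn_eq_indicator hH]
  exact Set.indicator_nonneg (fun y _ => ENNReal.toReal_nonneg) x

theorem mul_PhiFn_le {x : ℝ} (hx : 0 < x) :
    x * PhiFn φ x ≤ (1 + x) * (∫⁻ z in Ioi (0:ℝ), ENNReal.ofReal (min (z ^ 2) z) ∂φ).toReal := by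
  set M := (∫⁻ z in Ioi (0:ℝ), ENNReal.ofReal (min (z ^ 2) z) ∂φ).toReal with hM
  have hM0 : 0 ≤ M := ENNReal.toReal_nonneg
  have h1 : PhiFn φ x ≤ (x⁻¹ ⊔ 1) * M := by
    rw [PhiFn_eq_toReal hH hx]
    have := tailInt_le hH hx
    calc (tailInt φ x).toReal
        ≤ (ENNReal.ofReal (x⁻¹ ⊔ 1) * (∫⁻ z in Ioi (0:ℝ), ENNReal.ofReal (min (z ^ 2) z) ∂φ)).toReal := by
          refine ENNReal.toReal_mono ?_ this
          exact (ENNReal.mul_lt_top ENNReal.ofReal_lt_top hH.2.1).ne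
      _ = (x⁻¹ ⊔ 1) * M := by
          rw [ENNReal.toReal_mul, ENNReal.toReal_ofReal (by positivity)]
  calc x * PhiFn φ x ≤ x * ((x⁻¹ ⊔ 1) * M) :=
        mul_le_mul_of_nonneg_left h1 hx.le
    _ = (x * (x⁻¹ ⊔ 1)) * M := by ring
    _ ≤ (1 + x) * M := by
        refine mul_le_mul_of_nonneg_right ?_ hM0
        rw [mul_max_of_nonneg _ _ hx.le, mul_inv_cancel₀ hx.ne', mul_one]
        rcases le_total 1 x with h | h
        · rw [max_eq_right h]; linarith
        · rw [max_eq_left h]; linarith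

end MeasureFacts2

section MeasureFacts3

variable {φ : Measure ℝ} (hH : H0 φ)

theorem exp_poly_integrable {c : ℝ} (hc : 0 < c) :
    IntegrableOn (fun x => (1 + x) * Real.exp (-(c * x))) (Ioi (0:ℝ)) volume := by
  have hint : IntegrableOn (fun x => (1 + 2/c) * Real.exp (-(c/2) * x)) (Ioi (0:ℝ)) volume :=
    (exp_neg_integrableOn_Ioi 0 (by positivity)).const_mul _
  refine Integrable.mono hint ?_ ?_
  · exact ((continuous_const.add continuous_id).mul
      (Real.continuous_exp.comp (continuous_const.mul continuous_id).neg)).aestronglyMeasurable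
  · filter_upwards [ae_restrict_mem measurableSet_Ioi] with x hx
    rw [mem_Ioi] at hx
    have he : (0:ℝ) < Real.exp (-(c * x)) := Real.exp_pos _
    have he2 : (0:ℝ) < Real.exp (-(c/2) * x) := Real.exp_pos _
    rw [Real.norm_eq_abs, Real.norm_eq_abs, abs_of_pos (by positivity), abs_of_pos (by positivity)]
    have hxle : x ≤ (2/c) * Real.exp (c/2 * x) := by
      have h1 : c/2 * x ≤ Real.exp (c/2 * x) := by
        have := Real.add_one_le_exp (c/2 * x)
        linarith
      calc x = (2/c) * (c/2 * x) := by field_simp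
        _ ≤ (2/c) * Real.exp (c/2 * x) := by
            refine mul_le_mul_of_nonneg_left h1 (by positivity)
    have h1e : (1:ℝ) ≤ Real.exp (c/2 * x) := Real.one_le_exp (by positivity)
    have key : 1 + x ≤ (1 + 2/c) * Real.exp (c/2 * x) := by
      rw [add_mul, one_mul]
      exact add_le_add h1e hxle
    calc (1 + x) * Real.exp (-(c * x))
        ≤ ((1 + 2/c) * Real.exp (c/2 * x)) * Real.exp (-(c * x)) :=
          mul_le_mul_of_nonneg_right key he.le
      _ = (1 + 2/c) * Real.exp (-(c/2) * x) := by
          rw [mul_assoc, ← Real.exp_add]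
          ring_nf

include hH

theorem poly_exp_PhiFn_integrable {c : ℝ} (hc : 0 < c) :
    IntegrableOn (fun x => x * Real.exp (-(c * x)) * PhiFn φ x) (Ioi (0:ℝ)) volume := by
  set M := (∫⁻ z in Ioi (0:ℝ), ENNReal.ofReal (min (z ^ 2) z) ∂φ).toReal with hM
  have hM0 : 0 ≤ M := ENNReal.toReal_nonneg
  have hint : IntegrableOn (fun x => M * ((1 + x) * Real.exp (-(c * x)))) (Ioi (0:ℝ)) volume :=
    (exp_poly_integrable hc).const_mul M
  refine Integrable.mono hint ?_ ?_
  · refine AEStronglyMeasurable.mul ?_ (PhiFn_meas hH).aestronglyMeasurable.restrict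
    exact (measurable_id.mul
      (Real.measurable_exp.comp (measurable_const.mul measurable_id).neg)).aestronglyMeasurable
  · filter_upwards [ae_restrict_mem measurableSet_Ioi] with x hx
    rw [mem_Ioi] at hx
    have hP := PhiFn_nonneg hH x
    have he : (0:ℝ) < Real.exp (-(c * x)) := Real.exp_pos _
    rw [Real.norm_eq_abs, Real.norm_eq_abs, abs_of_nonneg (by positivity),
      abs_of_nonneg (by positivity)]
    calc x * Real.exp (-(c * x)) * PhiFn φ x = (x * PhiFn φ x) * Real.exp (-(c * x)) := by ring
      _ ≤ ((1 + x) * M) * Real.exp (-(c * x)) := by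
          exact mul_le_mul_of_nonneg_right (mul_PhiFn_le hH hx) he.le
      _ = M * ((1 + x) * Real.exp (-(c * x))) := by ring

end MeasureFacts3

section MeasureFacts4

variable {φ : Measure ℝ} (hH : H0 φ)

theorem lintegral_ofReal_sub_le {z : ℝ} (hz : 0 < z) :
    (∫⁻ x in Ioi (0:ℝ), ENNReal.ofReal (z - x)) ≤ ENNReal.ofReal (z ^ 2 / 2) := by
  have hsplit : (Ioi (0:ℝ)) = Ioc 0 z ∪ Ioi z := (Ioc_union_Ioi_eq_Ioi hz.le).symm
  have hdisj : Disjoint (Ioc (0:ℝ) z) (Ioi z) := Ioc_disjoint_Ioi le_rfl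
  rw [hsplit, lintegral_union measurableSet_Ioi hdisj]
  have h2 : (∫⁻ x in Ioi z, ENNReal.ofReal (z - x)) = 0 := by
    have : ∀ x ∈ Ioi z, ENNReal.ofReal (z - x) = 0 := fun x hx =>
      ENNReal.ofReal_eq_zero.2 (by linarith [mem_Ioi.1 hx])
    rw [setLIntegral_congr_fun measurableSet_Ioi this, lintegral_zero]
  have hint : IntegrableOn (fun x => z - x) (Ioc (0:ℝ) z) volume :=
    (continuous_const.sub continuous_id).integrableOn_Ioc
  have h1 : (∫⁻ x in Ioc (0:ℝ) z, ENNReal.ofReal (z - x)) = ENNReal.ofReal (z ^ 2 / 2) := by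
    rw [← ofReal_integral_eq_lintegral_ofReal hint
      ((ae_restrict_mem measurableSet_Ioc).mono fun x hx => sub_nonneg.2 hx.2)]
    congr 1
    rw [← intervalIntegral.integral_of_le hz.le]
    rw [intervalIntegral.integral_sub intervalIntegrable_const intervalIntegral.intervalIntegrable_id]
    rw [intervalIntegral.integral_const, integral_id]
    simp
    ring
  rw [h1, h2, add_zero]

include hH

theorem exp_PhiFn_integrable {c : ℝ} (hc : 0 < c) :
    IntegrableOn (fun x => Real.exp (-(c * x)) * PhiFn φ x) (Ioi (0:ℝ)) volume := by
  haveI : SigmaFinite φ := sigmaFinite_phi hH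
  set I := ∫⁻ z in Ioi (0:ℝ), ENNReal.ofReal (min (z ^ 2) z) ∂φ with hI
  set Ec := ∫⁻ x in Ioi (0:ℝ), ENNReal.ofReal (Real.exp (-(c * x))) with hEc
  have hEc_lt : Ec < ⊤ := by
    have hint : IntegrableOn (fun x => Real.exp (-(c * x))) (Ioi (0:ℝ)) volume := by
      simpa [neg_mul] using exp_neg_integrableOn_Ioi 0 hc
    have := hint.hasFiniteIntegral
    rwa [hasFiniteIntegral_iff_ofReal (ae_of_all _ fun x => (Real.exp_pos _).le)] at this
  set K := ENNReal.ofReal 2⁻¹ ⊔ Ec with hK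
  have hK_lt : K < ⊤ := sup_lt_iff.2 ⟨ENNReal.ofReal_lt_top, hEc_lt⟩
  have hA : ∀ z : ℝ, (∫⁻ x in Ioi (0:ℝ),
      ENNReal.ofReal (Real.exp (-(c * x))) * ENNReal.ofReal (z - x))
      ≤ K * ENNReal.ofReal (min (z ^ 2) z) := by
    intro z
    rcases le_or_gt z 0 with hz | hz
    · have h0 : ∀ x ∈ Ioi (0:ℝ), ENNReal.ofReal (Real.exp (-(c * x))) * ENNReal.ofReal (z - x)
          = 0 := fun x hx => by
        rw [ENNReal.ofReal_eq_zero.2 (by linarith [mem_Ioi.1 hx] : z - x ≤ 0), mul_zero]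
      rw [setLIntegral_congr_fun measurableSet_Ioi h0, lintegral_zero]
      exact zero_le
    · have hb1 : (∫⁻ x in Ioi (0:ℝ),
          ENNReal.ofReal (Real.exp (-(c * x))) * ENNReal.ofReal (z - x))
          ≤ ENNReal.ofReal (z ^ 2 / 2) := by
        refine le_trans ?_ (lintegral_ofReal_sub_le hz)
        refine setLIntegral_mono ((measurable_const.sub measurable_id).ennreal_ofReal)
          fun x hx => ?_
        calc ENNReal.ofReal (Real.exp (-(c * x))) * ENNReal.ofReal (z - x)
            ≤ 1 * ENNReal.ofReal (z - x) := by
              refine mul_le_mul_left (ENNReal.ofReal_le_one.2 ?_) _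
              exact Real.exp_le_one_iff.2 (by nlinarith [mem_Ioi.1 hx])
          _ = ENNReal.ofReal (z - x) := one_mul _
      have hb2 : (∫⁻ x in Ioi (0:ℝ),
          ENNReal.ofReal (Real.exp (-(c * x))) * ENNReal.ofReal (z - x))
          ≤ Ec * ENNReal.ofReal z := by
        calc (∫⁻ x in Ioi (0:ℝ), ENNReal.ofReal (Real.exp (-(c * x))) * ENNReal.ofReal (z - x))
            ≤ ∫⁻ x in Ioi (0:ℝ), ENNReal.ofReal (Real.exp (-(c * x))) * ENNReal.ofReal z := by
              refine setLIntegral_mono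
                (((measurable_id.const_mul c).neg.exp.ennreal_ofReal).mul_const _)
                fun x hx => ?_
              exact mul_le_mul_right (ENNReal.ofReal_le_ofReal (by linarith [mem_Ioi.1 hx])) _
          _ = Ec * ENNReal.ofReal z := lintegral_mul_const' _ _ ENNReal.ofReal_ne_top
      rcases le_total z 1 with hz1 | hz1
      · rw [min_eq_left (by nlinarith)]
        refine hb1.trans ?_
        have : ENNReal.ofReal (z ^ 2 / 2) = ENNReal.ofReal 2⁻¹ * ENNReal.ofReal (z ^ 2) := by
          rw [← ENNReal.ofReal_mul (by norm_num)]
          congr 1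
          ring
        rw [this]
        exact mul_le_mul_left le_sup_left _
      · rw [min_eq_right (by nlinarith)]
        exact hb2.trans (mul_le_mul_left le_sup_right _)
  have key : (∫⁻ x in Ioi (0:ℝ), ENNReal.ofReal (Real.exp (-(c * x)) * PhiFn φ x)) < ⊤ := by
    have congr1 : ∀ x ∈ Ioi (0:ℝ), ENNReal.ofReal (Real.exp (-(c * x)) * PhiFn φ x)
        = ENNReal.ofReal (Real.exp (-(c * x))) * tailInt φ x := fun x hx => by
      rw [ENNReal.ofReal_mul (Real.exp_pos _).le, PhiFn_eq_toReal hH (mem_Ioi.1 hx),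
        ENNReal.ofReal_toReal (tailInt_lt_top hH (mem_Ioi.1 hx)).ne]
    rw [setLIntegral_congr_fun measurableSet_Ioi congr1]
    have step : (∫⁻ x in Ioi (0:ℝ), ENNReal.ofReal (Real.exp (-(c * x))) * tailInt φ x)
        ≤ ∫⁻ x in Ioi (0:ℝ), ∫⁻ z in Ioi (0:ℝ),
            ENNReal.ofReal (Real.exp (-(c * x))) * ENNReal.ofReal (z - x) ∂φ := by
      refine lintegral_mono_ae ?_
      filter_upwards [ae_restrict_mem measurableSet_Ioi] with x hx
      rw [tailInt_eq hH (mem_Ioi.1 hx)]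
      calc ENNReal.ofReal (Real.exp (-(c * x))) * ∫⁻ z in Ioi x, ENNReal.ofReal (z - x) ∂φ
          ≤ ENNReal.ofReal (Real.exp (-(c * x))) * ∫⁻ z in Ioi (0:ℝ), ENNReal.ofReal (z - x) ∂φ :=
            mul_le_mul_right (lintegral_mono_set (Ioi_subset_Ioi (mem_Ioi.1 hx).le)) _
        _ = ∫⁻ z in Ioi (0:ℝ), ENNReal.ofReal (Real.exp (-(c * x))) * ENNReal.ofReal (z - x) ∂φ :=
            (lintegral_const_mul' _ _ ENNReal.ofReal_ne_top).symm
    have hswapmeas : AEMeasurable (Function.uncurry fun (x z : ℝ) =>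
        ENNReal.ofReal (Real.exp (-(c * x))) * ENNReal.ofReal (z - x))
        ((volume.restrict (Ioi (0:ℝ))).prod (φ.restrict (Ioi (0:ℝ)))) := by
      refine Measurable.aemeasurable ?_
      refine Measurable.fun_mul ?_ ?_
      · exact (measurable_fst.const_mul c).neg.exp.ennreal_ofReal
      · exact (measurable_snd.sub measurable_fst).ennreal_ofReal
    have swap : (∫⁻ x in Ioi (0:ℝ), ∫⁻ z in Ioi (0:ℝ),
          ENNReal.ofReal (Real.exp (-(c * x))) * ENNReal.ofReal (z - x) ∂φ)
        = ∫⁻ z in Ioi (0:ℝ), (∫⁻ x in Ioi (0:ℝ),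
            ENNReal.ofReal (Real.exp (-(c * x))) * ENNReal.ofReal (z - x)) ∂φ := by
      exact lintegral_lintegral_swap hswapmeas
    refine lt_of_le_of_lt (step.trans_eq swap) ?_
    have last : (∫⁻ z in Ioi (0:ℝ), (∫⁻ x in Ioi (0:ℝ),
          ENNReal.ofReal (Real.exp (-(c * x))) * ENNReal.ofReal (z - x)) ∂φ)
        ≤ ∫⁻ z in Ioi (0:ℝ), K * ENNReal.ofReal (min (z ^ 2) z) ∂φ := by
      refine lintegral_mono_ae (ae_of_all _ fun z => hA z)
    refine lt_of_le_of_lt last ?_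
    rw [lintegral_const_mul' _ _ hK_lt.ne]
    exact ENNReal.mul_lt_top hK_lt hH.2.1
  refine ⟨?_, ?_⟩
  · exact (((measurable_const.mul measurable_id).neg.exp.mul
      (PhiFn_meas hH))).aestronglyMeasurable.restrict
  · rw [hasFiniteIntegral_iff_ofReal
      (ae_of_all _ fun x => mul_nonneg (Real.exp_pos _).le (PhiFn_nonneg hH x))]
    exact key

end MeasureFacts4

section Positivity

variable {φ : Measure ℝ} (hH : H0 φ)

include hH

theorem exists_tail_pos : ∃ y₁ : ℝ, 0 < y₁ ∧ φ (Ioi y₁) ≠ 0 := by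
  by_contra hcon
  push_neg at hcon
  have hzero : ∀ y : ℝ, 0 < y → φ (Ioi y) = 0 := fun y hy => hcon y hy
  have hIoi0 : φ (Ioi (0:ℝ)) = 0 := by
    have hcover : Ioi (0:ℝ) ⊆ ⋃ n : ℕ, Ioi (1/(n+1) : ℝ) := by
      intro x hx
      obtain ⟨n, hn⟩ := exists_nat_one_div_lt (mem_Ioi.1 hx)
      exact mem_iUnion.2 ⟨n, hn⟩
    refine measure_mono_null hcover (measure_iUnion_null fun n => hzero _ (by positivity))
  have hle : (∫⁻ z in Ioo (0:ℝ) 1, ENNReal.ofReal z ∂φ) ≤ φ (Ioo (0:ℝ) 1) := by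
    calc (∫⁻ z in Ioo (0:ℝ) 1, ENNReal.ofReal z ∂φ)
        ≤ ∫⁻ _ in Ioo (0:ℝ) 1, 1 ∂φ := by
          refine setLIntegral_mono measurable_const fun z hz => ?_
          exact ENNReal.ofReal_le_one.2 hz.2.le
      _ = φ (Ioo (0:ℝ) 1) := setLIntegral_one _
  rw [hH.2.2] at hle
  have : φ (Ioo (0:ℝ) 1) = 0 := measure_mono_null Ioo_subset_Ioi_self hIoi0
  rw [this] at hle
  simp at hle

theorem exists_PhiFn_pos : ∃ y₁ : ℝ, 0 < y₁ ∧ ∀ x, 0 < x → x < y₁ → 0 < PhiFn φ x := by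
  obtain ⟨y₁, hy₁, hne⟩ := exists_tail_pos hH
  refine ⟨y₁, hy₁, fun x hx hxy => ?_⟩
  rw [PhiFn_eq_toReal hH hx]
  refine ENNReal.toReal_pos ?_ (tailInt_lt_top hH hx).ne
  have hT : 0 < levyTail φ y₁ :=
    ENNReal.toReal_pos hne (tail_lt_top hH hy₁).ne
  have hlow : ENNReal.ofReal (levyTail φ y₁) * ENNReal.ofReal (y₁ - x) ≤ tailInt φ x := by
    calc ENNReal.ofReal (levyTail φ y₁) * ENNReal.ofReal (y₁ - x)
        = ∫⁻ _ in Ioo x y₁, ENNReal.ofReal (levyTail φ y₁) := by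
          rw [setLIntegral_const, Real.volume_Ioo]
      _ ≤ ∫⁻ y in Ioo x y₁, ENNReal.ofReal (levyTail φ y) := by
          refine setLIntegral_mono levyTail_meas.ennreal_ofReal fun y hy => ?_
          refine ENNReal.ofReal_le_ofReal ?_
          have hyy : φ (Ioi y₁) ≤ φ (Ioi y) := measure_mono (Ioi_subset_Ioi hy.2.le)
          exact (ENNReal.toReal_le_toReal (tail_lt_top hH hy₁).ne
            (tail_lt_top hH (hx.trans hy.1)).ne).2 hyy
      _ ≤ tailInt φ x := lintegral_mono_set Ioo_subset_Ioi_self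
  intro h0
  rw [h0, le_zero_iff] at hlow
  have hpos : (0:ℝ≥0∞) < ENNReal.ofReal (levyTail φ y₁) * ENNReal.ofReal (y₁ - x) :=
    ENNReal.mul_pos (ENNReal.ofReal_pos.2 hT).ne' (ENNReal.ofReal_pos.2 (by linarith)).ne'
  rw [hlow] at hpos
  exact lt_irrefl _ hpos

end Positivity

section Psi



variable {φ : Measure ℝ} (hH : H0 φ)

include hH

theorem psiIntegral_hasDerivAt {ξ₀ : ℂ} (hξ : 0 < ξ₀.re) :
    HasDerivAt (fun ξ : ℂ => ∫ x in Ioi (0:ℝ), Complex.exp (-ξ * (x:ℂ)) * (PhiFn φ x : ℂ))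
      (∫ x in Ioi (0:ℝ), Complex.exp (-ξ₀ * (x:ℂ)) * -(x:ℂ) * (PhiFn φ x : ℂ)) ξ₀ := by
  set c := ξ₀.re with hc
  have hmeasF : ∀ ξ : ℂ, AEStronglyMeasurable (fun x : ℝ => Complex.exp (-ξ * (x:ℂ)) * (PhiFn φ x : ℂ))
      (volume.restrict (Ioi (0:ℝ))) := by
    intro ξ
    refine AEStronglyMeasurable.mul ?_ ?_
    · exact (Complex.continuous_exp.comp
        ((continuous_const.mul Complex.continuous_ofReal))).aestronglyMeasurable.restrict
    · exact (Complex.measurable_ofReal.comp (PhiFn_meas hH)).aestronglyMeasurable.restrict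
  have hnormexp : ∀ (ξ : ℂ) (x : ℝ), ‖Complex.exp (-ξ * (x:ℂ))‖ = Real.exp (-(ξ.re * x)) := by
    intro ξ x
    rw [Complex.norm_exp]
    congr 1
    simp [Complex.mul_re]
  have key := hasDerivAt_integral_of_dominated_loc_of_deriv_le
    (F := fun (ξ : ℂ) (x : ℝ) => Complex.exp (-ξ * (x:ℂ)) * (PhiFn φ x : ℂ))
    (F' := fun (ξ : ℂ) (x : ℝ) => Complex.exp (-ξ * (x:ℂ)) * -(x:ℂ) * (PhiFn φ x : ℂ))
    (x₀ := ξ₀)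
    (bound := fun x => x * Real.exp (-(c/2 * x)) * PhiFn φ x)
    (ball_mem_nhds ξ₀ (half_pos hξ))
    (Eventually.of_forall hmeasF)
    ?_ ?_ ?_ ?_ ?_
  · exact key.2
  · -- integrability at ξ₀
    refine Integrable.mono' (exp_PhiFn_integrable hH hξ) (hmeasF ξ₀) ?_
    filter_upwards [ae_restrict_mem measurableSet_Ioi] with x hx
    rw [norm_mul, hnormexp, Complex.norm_real, Real.norm_eq_abs,
      abs_of_nonneg (PhiFn_nonneg hH x)]
  · -- measurability of F' ξ₀
    refine AEStronglyMeasurable.mul (AEStronglyMeasurable.mul ?_ ?_) ?_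
    · exact (Complex.continuous_exp.comp
        ((continuous_const.mul Complex.continuous_ofReal))).aestronglyMeasurable.restrict
    · exact (Complex.continuous_ofReal).aestronglyMeasurable.restrict.neg
    · exact (Complex.measurable_ofReal.comp (PhiFn_meas hH)).aestronglyMeasurable.restrict
  · -- bound on the ball
    filter_upwards [ae_restrict_mem measurableSet_Ioi] with x hx
    intro ξ hξball
    rw [mem_ball, Complex.dist_eq] at hξball
    have hre : c/2 ≤ ξ.re := by
      have h1 : |(ξ - ξ₀).re| ≤ ‖ξ - ξ₀‖ := Complex.abs_re_le_norm _
      rw [Complex.sub_re] at h1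
      have := abs_le.1 h1
      linarith [this.1]
    have hx0 : (0:ℝ) < x := mem_Ioi.1 hx
    rw [norm_mul, norm_mul, hnormexp, norm_neg, Complex.norm_real, Complex.norm_real,
      Real.norm_eq_abs, Real.norm_eq_abs,
      abs_of_nonneg (PhiFn_nonneg hH x), abs_of_nonneg hx0.le]
    have hexp : Real.exp (-(ξ.re * x)) ≤ Real.exp (-(c/2 * x)) := by
      refine Real.exp_le_exp.2 ?_
      have : c/2 * x ≤ ξ.re * x := mul_le_mul_of_nonneg_right hre hx0.le
      linarith
    calc Real.exp (-(ξ.re * x)) * x * PhiFn φ x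
        ≤ Real.exp (-(c/2 * x)) * x * PhiFn φ x := by
          refine mul_le_mul_of_nonneg_right (mul_le_mul_of_nonneg_right hexp hx0.le)
            (PhiFn_nonneg hH x)
      _ = x * Real.exp (-(c/2 * x)) * PhiFn φ x := by ring
  · -- integrability of bound
    exact poly_exp_PhiFn_integrable hH (half_pos hξ)
  · -- differentiability in the ball
    refine ae_of_all _ fun x => ?_
    intro ξ _
    have h1 : HasDerivAt (fun ξ : ℂ => -ξ * (x:ℂ)) (-(x:ℂ)) ξ := by
      simpa using ((hasDerivAt_id ξ).neg.mul_const ((x:ℝ):ℂ))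
    exact (h1.cexp.mul_const ((PhiFn φ x : ℝ) : ℂ))

theorem psiFn_differentiableOn :
    DifferentiableOn ℂ (psiFn φ) {ξ : ℂ | 0 < ξ.re} := by
  intro ξ hξ
  have h1 : DifferentiableAt ℂ (psiFn φ) ξ :=
    ((differentiableAt_pow 2).mul (psiIntegral_hasDerivAt hH hξ).differentiableAt)
  exact h1.differentiableWithinAt

omit hH

theorem psiFn_conj (ξ : ℂ) : psiFn φ (conj ξ) = conj (psiFn φ ξ) := by
  rw [psiFn, psiFn, map_mul, map_pow, ← integral_conj]
  congr 1
  refine integral_congr_ae (ae_of_all _ fun x => ?_)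
  dsimp only
  rw [map_mul, ← Complex.exp_conj, map_mul, map_neg, Complex.conj_ofReal, Complex.conj_ofReal]

include hH

theorem psiFn_real_pos {t : ℝ} (ht : 0 < t) :
    ∃ r : ℝ, 0 < r ∧ psiFn φ ((t:ℝ):ℂ) = (r : ℂ) := by
  have hint0 : ∀ x : ℝ, Complex.exp (-(t:ℂ) * (x:ℂ)) * ((PhiFn φ x : ℝ) : ℂ)
      = ((Real.exp (-(t*x)) * PhiFn φ x : ℝ) : ℂ) := by
    intro x
    rw [show -(t:ℂ) * (x:ℂ) = ((-(t*x) : ℝ) : ℂ) by push_cast; ring, ← Complex.ofReal_exp]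
    push_cast
    ring
  set r0 := ∫ x in Ioi (0:ℝ), Real.exp (-(t*x)) * PhiFn φ x with hr0
  have hpos : 0 < r0 := by
    obtain ⟨y₁, hy₁, hP⟩ := exists_PhiFn_pos hH
    rw [hr0]
    rw [setIntegral_pos_iff_support_of_nonneg_ae ?hnn (exp_PhiFn_integrable hH ht)]
    case hnn =>
      filter_upwards [] with x
      exact mul_nonneg (Real.exp_pos _).le (PhiFn_nonneg hH x)
    have hsub : Ioo (0:ℝ) y₁ ⊆ Function.support (fun x => Real.exp (-(t*x)) * PhiFn φ x) ∩ Ioi 0 := by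
      intro x hx
      constructor
      · exact (mul_pos (Real.exp_pos _) (hP x hx.1 hx.2)).ne'
      · exact hx.1
    calc (0:ℝ≥0∞) < ENNReal.ofReal y₁ := ENNReal.ofReal_pos.2 hy₁
      _ = volume (Ioo (0:ℝ) y₁) := by rw [Real.volume_Ioo, sub_zero]
      _ ≤ volume (Function.support (fun x => Real.exp (-(t*x)) * PhiFn φ x) ∩ Ioi 0) :=
          measure_mono hsub
  refine ⟨t^2 * r0, by positivity, ?_⟩
  rw [psiFn]
  have : (∫ x in Ioi (0:ℝ), Complex.exp (-(t:ℂ) * (x:ℂ)) * ((PhiFn φ x : ℝ) : ℂ)) = (r0 : ℂ) := by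
    rw [show (fun x : ℝ => Complex.exp (-(t:ℂ) * (x:ℂ)) * ((PhiFn φ x : ℝ) : ℂ))
      = fun x : ℝ => ((Real.exp (-(t*x)) * PhiFn φ x : ℝ) : ℂ) from funext hint0]
    exact integral_ofReal
  rw [this]
  push_cast
  ring

end Psi



section FinalAux

theorem iteratedDeriv_eventuallyEq {f g : ℂ → ℂ} {x : ℂ} (h : f =ᶠ[𝓝 x] g) (n : ℕ) :
    iteratedDeriv n f =ᶠ[𝓝 x] iteratedDeriv n g := by
  induction n with
  | zero => simpa using h
  | succ n IH => rw [iteratedDeriv_succ, iteratedDeriv_succ]; exact IH.deriv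

theorem prod_neg_one_sub (m : ℕ) :
    (∏ i ∈ Finset.range m, ((-1 : ℂ) - i)) = (-1) ^ m * m.factorial := by
  induction m with
  | zero => simp
  | succ m IH =>
    rw [Finset.prod_range_succ, IH, Nat.factorial_succ]
    push_cast
    ring

theorem prod_neg_two_sub (m : ℕ) :
    (∏ i ∈ Finset.range m, ((-2 : ℂ) - i)) = (-1) ^ m * (m + 1).factorial := by
  induction m with
  | zero => simp
  | succ m IH =>
    have hf : ((m + 1 + 1).factorial : ℂ) = ((m:ℂ) + 2) * ((m + 1).factorial : ℂ) := by
      rw [Nat.factorial_succ]; push_cast; ring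
    rw [Finset.prod_range_succ, IH, hf]
    push_cast
    ring

theorem iteratedDeriv_const_succ (c : ℂ) (n : ℕ) :
    iteratedDeriv (n + 1) (fun _ : ℂ => c) = fun _ => 0 := by
  induction n with
  | zero => rw [iteratedDeriv_one]; exact deriv_const' c
  | succ n IH => rw [iteratedDeriv_succ, IH]; funext z; exact deriv_const z 0

theorem iteratedDeriv_id_ss (n : ℕ) :
    iteratedDeriv (n + 2) (fun z : ℂ => z) = fun _ => 0 := by
  rw [show n + 2 = (n + 1) + 1 from rfl, iteratedDeriv_succ']
  rw [show deriv (fun z : ℂ => z) = fun _ : ℂ => (1:ℂ) from funext fun z => deriv_id z]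
  exact iteratedDeriv_const_succ 1 n

theorem conv_coef {F G : ℂ → ℂ} {s : Set ℂ} (hs : IsOpen s) (hF : AnalyticOnNhd ℂ F s)
    (hG : AnalyticOnNhd ℂ G s) {ξ₀ : ℂ} (hξ : ξ₀ ∈ s) {h : ℝ} (hh : (h:ℂ) ≠ 0) (m : ℕ) :
    (∑ j ∈ Finset.range (m + 1),
      (((-1:ℂ) ^ (m - j) / (((m - j).factorial : ℂ) * (h:ℂ) ^ (m - j))) *
        iteratedDeriv (m - j) F ξ₀) *
      (((-1:ℂ) ^ j / ((j.factorial : ℂ) * (h:ℂ) ^ j)) * iteratedDeriv j G ξ₀))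
    = ((-1:ℂ) ^ m / ((m.factorial : ℂ) * (h:ℂ) ^ m)) *
        iteratedDeriv m (fun z => F z * G z) ξ₀ := by
  rw [iteratedDeriv_mul_of_analytic hs hF hG m ξ₀ hξ]
  rw [← Finset.sum_range_reflect
    (fun j => (m.choose j : ℂ) * iteratedDeriv j F ξ₀ * iteratedDeriv (m - j) G ξ₀) (m + 1)]
  rw [Finset.mul_sum]
  refine Finset.sum_congr rfl fun j hj => ?_
  rw [Finset.mem_range] at hj
  have hjm : j ≤ m := by omega
  have e1 : m + 1 - 1 - j = m - j := by omega
  have e2 : m - (m - j) = j := by omega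
  rw [e1, e2, Nat.choose_symm hjm]
  obtain ⟨a, rfl⟩ : ∃ a, m = a + j := ⟨m - j, by omega⟩
  have e3 : a + j - j = a := by omega
  rw [e3]
  have hcast : ((a + j).choose j : ℂ) = ((a+j).factorial : ℂ) / ((j.factorial : ℂ) * (a.factorial : ℂ)) := by
    rw [Nat.cast_choose ℂ (Nat.le_add_left j a), show a + j - j = a from by omega]
  rw [hcast]
  have hfa : (a.factorial : ℂ) ≠ 0 := Nat.cast_ne_zero.2 a.factorial_ne_zero
  have hfj : (j.factorial : ℂ) ≠ 0 := Nat.cast_ne_zero.2 j.factorial_ne_zero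
  have hfaj : ((a+j).factorial : ℂ) ≠ 0 := Nat.cast_ne_zero.2 (a+j).factorial_ne_zero
  have hha : (h:ℂ) ^ a ≠ 0 := pow_ne_zero _ hh
  have hhj : (h:ℂ) ^ j ≠ 0 := pow_ne_zero _ hh
  rw [pow_add ((-1:ℂ)) a j, pow_add ((h:ℂ)) a j]
  field_simp

theorem zpow_base_one_div {h : ℝ} (m : ℕ) :
    ((1:ℂ)/(h:ℂ)) ^ ((-1:ℤ) - m) = (h:ℂ) ^ (m + 1) := by
  rw [one_div, inv_zpow, ← zpow_neg,
    show (-((-1:ℤ) - m)) = ((m + 1 : ℕ) : ℤ) by push_cast; ring, zpow_natCast]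

theorem zpow_base_one_div' {h : ℝ} (m : ℕ) :
    ((1:ℂ)/(h:ℂ)) ^ ((-2:ℤ) - m) = (h:ℂ) ^ (m + 2) := by
  rw [one_div, inv_zpow, ← zpow_neg,
    show (-((-2:ℤ) - m)) = ((m + 2 : ℕ) : ℤ) by push_cast; ring, zpow_natCast]

theorem scalar_iter_zpow_neg_one {h : ℝ} (hh : 0 < h) (m : ℕ) :
    ((-1:ℂ) ^ m / ((m.factorial : ℂ) * (h:ℂ) ^ m)) *
      iteratedDeriv m (fun z : ℂ => z ^ (-1:ℤ)) ((1:ℂ)/(h:ℂ)) = (h:ℂ) := by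
  have hhne : (h:ℂ) ≠ 0 := Complex.ofReal_ne_zero.2 hh.ne'
  have hfm : (m.factorial : ℂ) ≠ 0 := Nat.cast_ne_zero.2 m.factorial_ne_zero
  have hhm : (h:ℂ) ^ m ≠ 0 := pow_ne_zero _ hhne
  rw [iteratedDeriv_eq_iterate, iter_deriv_zpow (-1 : ℤ) _ m]
  rw [show (∏ i ∈ Finset.range m, (((-1:ℤ) : ℂ) - i)) = (-1:ℂ) ^ m * m.factorial by
    rw [← prod_neg_one_sub m]; norm_num]
  rw [zpow_base_one_div m]
  have hneg : ((-1:ℂ)) ^ m * ((-1:ℂ)) ^ m = 1 := by rw [← mul_pow]; norm_num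
  rw [pow_succ]
  field_simp
  linear_combination hneg

theorem scalar_iter_zpow_neg_two {h : ℝ} (hh : 0 < h) (m : ℕ) :
    ((-1:ℂ) ^ m / ((m.factorial : ℂ) * (h:ℂ) ^ m)) *
      iteratedDeriv m (fun z : ℂ => z ^ (-2:ℤ)) ((1:ℂ)/(h:ℂ)) = ((m:ℂ) + 1) * (h:ℂ) ^ 2 := by
  have hhne : (h:ℂ) ≠ 0 := Complex.ofReal_ne_zero.2 hh.ne'
  have hfm : (m.factorial : ℂ) ≠ 0 := Nat.cast_ne_zero.2 m.factorial_ne_zero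
  have hhm : (h:ℂ) ^ m ≠ 0 := pow_ne_zero _ hhne
  rw [iteratedDeriv_eq_iterate, iter_deriv_zpow (-2 : ℤ) _ m]
  rw [show (∏ i ∈ Finset.range m, (((-2:ℤ) : ℂ) - i)) = (-1:ℂ) ^ m * (m+1).factorial by
    rw [← prod_neg_two_sub m]; norm_num]
  rw [zpow_base_one_div' m]
  have hneg : ((-1:ℂ)) ^ m * ((-1:ℂ)) ^ m = 1 := by rw [← mul_pow]; norm_num
  have hfs : ((m+1).factorial : ℂ) = ((m:ℂ) + 1) * (m.factorial : ℂ) := by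
    rw [Nat.factorial_succ]; push_cast; ring
  rw [show m + 2 = m + 1 + 1 from rfl, pow_succ, pow_succ, hfs]
  field_simp
  linear_combination hneg

theorem scalar_iter_id {h : ℝ} (hh : 0 < h) (m : ℕ) :
    (((-1:ℂ) ^ m / ((m.factorial : ℂ) * (h:ℂ) ^ m)) *
      iteratedDeriv m (fun z : ℂ => z) ((1:ℂ)/(h:ℂ))).re
    = if m = 0 then 1/h else if m = 1 then -(1/h) else 0 := by
  have hξ : (1:ℂ)/(h:ℂ) = (((1/h : ℝ)) : ℂ) := by push_cast; ring
  match m with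
  | 0 =>
    rw [if_pos rfl]
    simp only [iteratedDeriv_zero, pow_zero, Nat.factorial_zero, Nat.cast_one, one_mul,
      div_one, one_mul, hξ]
    exact Complex.ofReal_re _
  | 1 =>
    rw [if_neg one_ne_zero, if_pos rfl]
    rw [iteratedDeriv_one]
    rw [show deriv (fun z : ℂ => z) = fun _ : ℂ => (1:ℂ) from funext fun z => deriv_id z]
    simp only [pow_one, Nat.factorial_one, Nat.cast_one, one_mul, mul_one]
    rw [show (-1:ℂ) / (h:ℂ) = ((-(1/h) : ℝ) : ℂ) by push_cast; ring]
    exact Complex.ofReal_re _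
  | (n+2) =>
    rw [if_neg (by omega), if_neg (by omega), iteratedDeriv_id_ss]
    simp

theorem scalar_iter_one {h : ℝ} (m : ℕ) :
    (((-1:ℂ) ^ m / ((m.factorial : ℂ) * (h:ℂ) ^ m)) *
      iteratedDeriv m (fun _ : ℂ => (1:ℂ)) ((1:ℂ)/(h:ℂ))).re = if m = 0 then 1 else 0 := by
  match m with
  | 0 => simp
  | (n+1) =>
    rw [if_neg (by omega), iteratedDeriv_const_succ]
    simp

end FinalAux

/-- discrete convolution identities among the Grünwald-type coefficients. -/
theorem grunwald_discrete_convolution (φ : Measure ℝ) (hH0 : H0 φ) (h : ℝ) (hh : 0 < h)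
    (m : ℕ) :
    (∑ j ∈ Finset.range (m + 1), grunK φ (-1) (m - j) h * grunPsi φ j h) =
      (if m = 0 then 1 / h else if m = 1 then -(1 / h) else 0) ∧
    (∑ j ∈ Finset.range (m + 1), grunK φ 0 (m - j) h * grunPsi φ j h) =
      (∑ j ∈ Finset.range (m + 1), grunK φ (-1) (m - j) h * grunPsiM1 φ j h) ∧
    (∑ j ∈ Finset.range (m + 1), grunK φ 0 (m - j) h * grunPsi φ j h) =
      (if m = 0 then 1 else 0) ∧
    (∑ j ∈ Finset.range (m + 1), grunK φ 1 (m - j) h * grunPsi φ j h) = h ∧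
    (∑ j ∈ Finset.range (m + 1), grunK φ 0 (m - j) h * grunPsiM1 φ j h) = h ∧
    (∑ j ∈ Finset.range (m + 1), grunK φ 1 (m - j) h * grunPsiM1 φ j h) =
      (m + 1) * h ^ 2 := by
  classical
  have hhne : (h:ℂ) ≠ 0 := Complex.ofReal_ne_zero.2 hh.ne'
  have hξreal : (1:ℂ)/(h:ℂ) = (((1/h : ℝ)) : ℂ) := by push_cast; ring
  have hconjξ : conj ((1:ℂ)/(h:ℂ)) = (1:ℂ)/(h:ℂ) := by
    rw [hξreal, Complex.conj_ofReal]
  have hre0' : (0:ℝ) < 1/h := by positivity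
  have hre0 : (0:ℝ) < ((1:ℂ)/(h:ℂ)).re := by rw [hξreal, Complex.ofReal_re]; exact hre0'
  obtain ⟨rψ, hrψ, hψval0⟩ := psiFn_real_pos hH0 hre0'
  have hψval : psiFn φ ((1:ℂ)/(h:ℂ)) = (rψ : ℂ) := by rw [hξreal]; exact hψval0
  have hψne : psiFn φ ((1:ℂ)/(h:ℂ)) ≠ 0 := by
    rw [hψval]; exact_mod_cast hrψ.ne'
  have hSopen : IsOpen {ξ : ℂ | 0 < ξ.re} := isOpen_lt continuous_const Complex.continuous_re
  have hψdiff := psiFn_differentiableOn hH0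
  have hψat : DifferentiableAt ℂ (psiFn φ) ((1:ℂ)/(h:ℂ)) :=
    hψdiff.differentiableAt (hSopen.mem_nhds hre0)
  have hξne0 : ((1:ℂ)/(h:ℂ)) ≠ 0 := by
    rw [hξreal]; exact Complex.ofReal_ne_zero.2 hre0'.ne'
  have hev : ∀ᶠ ξ in 𝓝 ((1:ℂ)/(h:ℂ)), 0 < ξ.re ∧ psiFn φ ξ ≠ 0 ∧ ξ ≠ 0 := by
    have e1 : ∀ᶠ ξ in 𝓝 ((1:ℂ)/(h:ℂ)), 0 < ξ.re := hSopen.eventually_mem hre0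
    have e2 : ∀ᶠ ξ in 𝓝 ((1:ℂ)/(h:ℂ)), psiFn φ ξ ≠ 0 :=
      hψat.continuousAt.eventually_ne hψne
    have e3 : ∀ᶠ ξ in 𝓝 ((1:ℂ)/(h:ℂ)), ξ ≠ 0 := eventually_ne_nhds hξne0
    exact e1.and (e2.and e3)
  obtain ⟨r, hr, hball⟩ := Metric.eventually_nhds_iff_ball.1 hev
  have hmemB : (1:ℂ)/(h:ℂ) ∈ ball ((1:ℂ)/(h:ℂ)) r := mem_ball_self hr
  have hψB : DifferentiableOn ℂ (psiFn φ) (ball ((1:ℂ)/(h:ℂ)) r) :=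
    hψdiff.mono fun ξ hξ => (hball ξ hξ).1
  have hdivB : DifferentiableOn ℂ (fun ξ : ℂ => psiFn φ ξ / ξ) (ball ((1:ℂ)/(h:ℂ)) r) :=
    fun ξ hξ => (hψB ξ hξ).div differentiableAt_id.differentiableWithinAt (hball ξ hξ).2.2
  have hKB : ∀ k : ℤ, DifferentiableOn ℂ (fun ξ : ℂ => ξ ^ k / psiFn φ ξ)
      (ball ((1:ℂ)/(h:ℂ)) r) := fun k ξ hξ =>
    ((differentiableAt_zpow.2 (Or.inl (hball ξ hξ).2.2)).differentiableWithinAt).div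
      (hψB ξ hξ) (hball ξ hξ).2.1
  have hreflψ : ∀ z : ℂ, psiFn φ (conj z) = conj (psiFn φ z) := psiFn_conj
  have hrefldiv : ∀ z : ℂ, psiFn φ (conj z) / (conj z) = conj (psiFn φ z / z) := fun z => by
    rw [hreflψ, ← map_div₀]
  have hreflK : ∀ (k : ℤ) (z : ℂ),
      (conj z) ^ k / psiFn φ (conj z) = conj (z ^ k / psiFn φ z) := fun k z => by
    rw [hreflψ, ← map_zpow₀, ← map_div₀]
  have master : ∀ (F G : ℂ → ℂ), DifferentiableOn ℂ F (ball ((1:ℂ)/(h:ℂ)) r) →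
      DifferentiableOn ℂ G (ball ((1:ℂ)/(h:ℂ)) r) →
      (∀ z : ℂ, F (conj z) = conj (F z)) →
      (∀ z : ℂ, G (conj z) = conj (G z)) →
      (∑ j ∈ Finset.range (m + 1),
        ((((-1:ℂ) ^ (m - j) / (((m - j).factorial : ℂ) * (h:ℂ) ^ (m - j))) *
          iteratedDeriv (m - j) F ((1:ℂ)/(h:ℂ))).re) *
        ((((-1:ℂ) ^ j / ((j.factorial : ℂ) * (h:ℂ) ^ j)) *
          iteratedDeriv j G ((1:ℂ)/(h:ℂ))).re))
      = (((-1:ℂ) ^ m / ((m.factorial : ℂ) * (h:ℂ) ^ m)) *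
          iteratedDeriv m (fun z => F z * G z) ((1:ℂ)/(h:ℂ))).re := by
    intro F G hFB hGB hFr hGr
    have hFan := hFB.analyticOnNhd isOpen_ball
    have hGan := hGB.analyticOnNhd isOpen_ball
    have hscalar_real : ∀ j : ℕ,
        conj ((-1:ℂ) ^ j / ((j.factorial : ℂ) * (h:ℂ) ^ j))
          = (-1:ℂ) ^ j / ((j.factorial : ℂ) * (h:ℂ) ^ j) := by
      intro j
      rw [map_div₀, map_pow, map_mul, map_pow, Complex.conj_ofReal, map_natCast, map_neg, map_one]
    have hrealD : ∀ (f : ℂ → ℂ), DifferentiableOn ℂ f (ball ((1:ℂ)/(h:ℂ)) r) →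
        (∀ z : ℂ, f (conj z) = conj (f z)) → ∀ j : ℕ,
        conj (iteratedDeriv j f ((1:ℂ)/(h:ℂ))) = iteratedDeriv j f ((1:ℂ)/(h:ℂ)) := by
      intro f hfB hfr j
      have := iteratedDeriv_conj_symm hconjξ hfB (fun z _ => hfr z) j _ hmemB
      rw [hconjξ] at this
      exact this.symm
    have hcoef_real : ∀ (f : ℂ → ℂ), DifferentiableOn ℂ f (ball ((1:ℂ)/(h:ℂ)) r) →
        (∀ z : ℂ, f (conj z) = conj (f z)) → ∀ j : ℕ,
        (((-1:ℂ) ^ j / ((j.factorial : ℂ) * (h:ℂ) ^ j)) *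
          iteratedDeriv j f ((1:ℂ)/(h:ℂ))).im = 0 := by
      intro f hfB hfr j
      rw [← Complex.conj_eq_iff_im, map_mul, hscalar_real j, hrealD f hfB hfr j]
    have hterm : ∀ j ∈ Finset.range (m + 1),
        ((((-1:ℂ) ^ (m - j) / (((m - j).factorial : ℂ) * (h:ℂ) ^ (m - j))) *
          iteratedDeriv (m - j) F ((1:ℂ)/(h:ℂ))).re) *
        ((((-1:ℂ) ^ j / ((j.factorial : ℂ) * (h:ℂ) ^ j)) *
          iteratedDeriv j G ((1:ℂ)/(h:ℂ))).re)
        = (((((-1:ℂ) ^ (m - j) / (((m - j).factorial : ℂ) * (h:ℂ) ^ (m - j))) *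
            iteratedDeriv (m - j) F ((1:ℂ)/(h:ℂ)))) *
          ((((-1:ℂ) ^ j / ((j.factorial : ℂ) * (h:ℂ) ^ j)) *
            iteratedDeriv j G ((1:ℂ)/(h:ℂ))))).re := by
      intro j _
      have key : ∀ a b : ℂ, a.im = 0 → b.im = 0 → a.re * b.re = (a * b).re := by
        intro a b ha hb
        rw [Complex.mul_re, ha, hb]
        ring
      exact key _ _ (hcoef_real F hFB hFr (m - j)) (hcoef_real G hGB hGr j)
    rw [Finset.sum_congr rfl hterm, ← Complex.re_sum]
    congr 1
    exact conv_coef isOpen_ball hFan hGan hmemB hhne m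
  -- the six sums
  have val1 : (∑ j ∈ Finset.range (m + 1), grunK φ (-1) (m - j) h * grunPsi φ j h) =
      (if m = 0 then 1 / h else if m = 1 then -(1 / h) else 0) := by
    simp only [grunK, grunPsi]
    rw [master (fun ξ : ℂ => ξ ^ (-(-1:ℤ)) / psiFn φ ξ) (psiFn φ)
      (hKB _) hψB (hreflK _) hreflψ]
    have hgerm : (fun z : ℂ => (z ^ (-(-1:ℤ)) / psiFn φ z) * psiFn φ z)
        =ᶠ[𝓝 ((1:ℂ)/(h:ℂ))] (fun z : ℂ => z) := by
      filter_upwards [isOpen_ball.mem_nhds hmemB] with z hz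
      have h1 := (hball z hz).2.1
      simp only [neg_neg, zpow_one]
      field_simp
    rw [(iteratedDeriv_eventuallyEq hgerm m).eq_of_nhds]
    exact scalar_iter_id hh m
  have val3 : (∑ j ∈ Finset.range (m + 1), grunK φ 0 (m - j) h * grunPsi φ j h) =
      (if m = 0 then 1 else 0) := by
    simp only [grunK, grunPsi]
    rw [master (fun ξ : ℂ => ξ ^ (-(0:ℤ)) / psiFn φ ξ) (psiFn φ)
      (hKB _) hψB (hreflK _) hreflψ]
    have hgerm : (fun z : ℂ => (z ^ (-(0:ℤ)) / psiFn φ z) * psiFn φ z)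
        =ᶠ[𝓝 ((1:ℂ)/(h:ℂ))] (fun _ : ℂ => (1:ℂ)) := by
      filter_upwards [isOpen_ball.mem_nhds hmemB] with z hz
      have h1 := (hball z hz).2.1
      simp only [neg_zero, zpow_zero]
      field_simp
    rw [(iteratedDeriv_eventuallyEq hgerm m).eq_of_nhds]
    exact scalar_iter_one m
  have val2b : (∑ j ∈ Finset.range (m + 1), grunK φ (-1) (m - j) h * grunPsiM1 φ j h) =
      (if m = 0 then 1 else 0) := by
    simp only [grunK, grunPsiM1]
    rw [master (fun ξ : ℂ => ξ ^ (-(-1:ℤ)) / psiFn φ ξ) (fun ξ : ℂ => psiFn φ ξ / ξ)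
      (hKB _) hdivB (hreflK _) hrefldiv]
    have hgerm : (fun z : ℂ => (z ^ (-(-1:ℤ)) / psiFn φ z) * (psiFn φ z / z))
        =ᶠ[𝓝 ((1:ℂ)/(h:ℂ))] (fun _ : ℂ => (1:ℂ)) := by
      filter_upwards [isOpen_ball.mem_nhds hmemB] with z hz
      have h1 := (hball z hz).2.1
      have h2 := (hball z hz).2.2
      simp only [neg_neg, zpow_one]
      field_simp
    rw [(iteratedDeriv_eventuallyEq hgerm m).eq_of_nhds]
    exact scalar_iter_one m
  have val4 : (∑ j ∈ Finset.range (m + 1), grunK φ 1 (m - j) h * grunPsi φ j h) = h := by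
    simp only [grunK, grunPsi]
    rw [master (fun ξ : ℂ => ξ ^ (-(1:ℤ)) / psiFn φ ξ) (psiFn φ)
      (hKB _) hψB (hreflK _) hreflψ]
    have hgerm : (fun z : ℂ => (z ^ (-(1:ℤ)) / psiFn φ z) * psiFn φ z)
        =ᶠ[𝓝 ((1:ℂ)/(h:ℂ))] (fun z : ℂ => z ^ (-1:ℤ)) := by
      filter_upwards [isOpen_ball.mem_nhds hmemB] with z hz
      have h1 := (hball z hz).2.1
      field_simp
    rw [(iteratedDeriv_eventuallyEq hgerm m).eq_of_nhds, scalar_iter_zpow_neg_one hh m]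
    exact Complex.ofReal_re h
  have val5 : (∑ j ∈ Finset.range (m + 1), grunK φ 0 (m - j) h * grunPsiM1 φ j h) = h := by
    simp only [grunK, grunPsiM1]
    rw [master (fun ξ : ℂ => ξ ^ (-(0:ℤ)) / psiFn φ ξ) (fun ξ : ℂ => psiFn φ ξ / ξ)
      (hKB _) hdivB (hreflK _) hrefldiv]
    have hgerm : (fun z : ℂ => (z ^ (-(0:ℤ)) / psiFn φ z) * (psiFn φ z / z))
        =ᶠ[𝓝 ((1:ℂ)/(h:ℂ))] (fun z : ℂ => z ^ (-1:ℤ)) := by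
      filter_upwards [isOpen_ball.mem_nhds hmemB] with z hz
      have h1 := (hball z hz).2.1
      have h2 := (hball z hz).2.2
      simp only [neg_zero, zpow_zero, zpow_neg_one]
      field_simp
    rw [(iteratedDeriv_eventuallyEq hgerm m).eq_of_nhds, scalar_iter_zpow_neg_one hh m]
    exact Complex.ofReal_re h
  have val6 : (∑ j ∈ Finset.range (m + 1), grunK φ 1 (m - j) h * grunPsiM1 φ j h) =
      (m + 1) * h ^ 2 := by
    simp only [grunK, grunPsiM1]
    rw [master (fun ξ : ℂ => ξ ^ (-(1:ℤ)) / psiFn φ ξ) (fun ξ : ℂ => psiFn φ ξ / ξ)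
      (hKB _) hdivB (hreflK _) hrefldiv]
    have hgerm : (fun z : ℂ => (z ^ (-(1:ℤ)) / psiFn φ z) * (psiFn φ z / z))
        =ᶠ[𝓝 ((1:ℂ)/(h:ℂ))] (fun z : ℂ => z ^ (-2:ℤ)) := by
      filter_upwards [isOpen_ball.mem_nhds hmemB] with z hz
      have h1 := (hball z hz).2.1
      have h2 := (hball z hz).2.2
      have e2 : (z : ℂ) ^ (-2:ℤ) = (z * z)⁻¹ := by
        rw [show (-2:ℤ) = -(2:ℤ) from rfl, zpow_neg, zpow_two]
      rw [e2, zpow_neg_one]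
      field_simp
    rw [(iteratedDeriv_eventuallyEq hgerm m).eq_of_nhds, scalar_iter_zpow_neg_two hh m]
    rw [show ((m:ℂ) + 1) * (h:ℂ) ^ 2 = ((((m:ℝ) + 1) * h ^ 2 : ℝ) : ℂ) by push_cast; ring]
    rw [Complex.ofReal_re]
  exact ⟨val1, val3.trans val2b.symm, val3, val4, val5, val6⟩
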